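/- arXiv:1310.1853 — 2 statements merged into one kernel-verified Lean document; each statement's English description precedes it below -/
import Mathlib

section
/- Let N > 0, μ_P, μ_D ≥ 0, and ς_P > 0 with ς_P ≠ 1; set ν_P = 1 - μ_D - μ_P. Define sequences x_{0,k}(t) for k ≥ 0 by x_{0,0}(0) = N, x_{0,k}(0) = 0 for k ≥ 1, and the recursion x_{0,k}(t) = ν_P ς_P^k x_{0,k}(t-1) + μ_P ς_P^{k-1} x_{0,k-1}(t-1) (with x_{0,-1} ≡ 0). Then for all t ≥ k, x_{0,k}(t) = N μ_P^k ν_P^{t-k} ς_P^{k(k-1)/2} ∏_{n=0}^{k-1} (1 - ς_P^{t-n})/(1 - ς_P^{n+1}). -/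
/-- closed form for the expected number of cells without the primary
driver mutation and with `k` secondary driver mutations, when the secondary driver
fitness advantage `ς_P ≠ 1`. Here `x k t` is `x_{0,k}(t)` and `ν_P = 1 - μ_D - μ_P`. -/
theorem cells_without_driver_closed_form
    (N μP μD ςP : ℝ) (hN : 0 < N) (hμP : 0 ≤ μP) (hμD : 0 ≤ μD)
    (hςP : 0 < ςP) (hςP1 : ςP ≠ 1)
    (x : ℕ → ℕ → ℝ)
    (hinit0 : x 0 0 = N)
    (hinit : ∀ k, 1 ≤ k → x k 0 = 0)
    (hrec : ∀ k t, 1 ≤ t →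
      x k t = (1 - μD - μP) * ςP ^ k * x k (t - 1)
        + (if k = 0 then 0 else μP * ςP ^ (k - 1) * x (k - 1) (t - 1))) :
    ∀ k t, k ≤ t →
      x k t = N * μP ^ k * (1 - μD - μP) ^ (t - k) * ςP ^ (k * (k - 1) / 2)
        * ∏ n ∈ Finset.range k, (1 - ςP ^ (t - n)) / (1 - ςP ^ (n + 1)) := by
  have hne : ∀ j : ℕ, 1 ≤ j → (1 - ςP ^ j) ≠ 0 := by
    intro j hj
    rcases lt_or_gt_of_ne hςP1 with h | h
    · have : ςP ^ j < 1 := pow_lt_one₀ hςP.le h (by omega)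
      intro hc; linarith
    · have : 1 < ςP ^ j := one_lt_pow₀ h (by omega)
      intro hc; linarith
  have hBne : ∀ j : ℕ, (∏ n ∈ Finset.range j, (1 - ςP ^ (n + 1))) ≠ 0 :=
    fun j => Finset.prod_ne_zero_iff.mpr fun n _ => hne (n + 1) (by omega)
  have hzero : ∀ t k, t < k → x k t = 0 := by
    intro t
    induction t with
    | zero => exact fun k hk => hinit k hk
    | succ t ih =>
      intro k hk
      rw [hrec k (t + 1) (by omega)]
      simp only [Nat.add_sub_cancel]
      rw [if_neg (by omega), ih k (by omega), ih (k - 1) (by omega)]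
      ring
  have hT : ∀ m : ℕ, (m + 1) * m / 2 = m * (m - 1) / 2 + m := by
    intro m
    cases m with
    | zero => rfl
    | succ p =>
      obtain ⟨c, hc⟩ := Nat.even_mul_succ_self p
      have h1 : (p + 1 + 1) * (p + 1) = p * (p + 1) + 2 * (p + 1) := by ring
      have h2 : (p + 1) * (p + 1 - 1) = p * (p + 1) := by
        simp [Nat.mul_comm]
      rw [h1, h2, hc]
      omega
  have prodA : ∀ t m : ℕ, (∏ n ∈ Finset.range (m + 1), (1 - ςP ^ (t + 1 - n)))
      = (1 - ςP ^ (t + 1)) * ∏ n ∈ Finset.range m, (1 - ςP ^ (t - n)) := by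
    intro t m
    rw [Finset.prod_range_succ']
    simp only [Nat.sub_zero]
    rw [mul_comm]
    congr 1
    exact Finset.prod_congr rfl fun i _ => by
      rw [show t + 1 - (i + 1) = t - i from by omega]
  intro k t
  induction t generalizing k with
  | zero =>
    intro hk
    interval_cases k
    simpa using hinit0
  | succ t ih =>
    intro hk
    rcases Nat.eq_zero_or_pos k with rfl | hk0
    · rw [hrec 0 (t + 1) (by omega)]
      simp only [Nat.add_sub_cancel, if_pos]
      rw [ih 0 (by omega)]
      simp only [pow_zero, Nat.sub_zero, Finset.range_zero, Finset.prod_empty,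
        mul_one, one_mul, add_zero]
      rw [pow_succ]
      ring
    · obtain ⟨m, rfl⟩ : ∃ m, k = m + 1 := ⟨k - 1, by omega⟩
      rw [hrec (m + 1) (t + 1) (by omega), if_neg (by omega)]
      simp only [Nat.add_sub_cancel]
      rcases Nat.lt_or_ge t (m + 1) with hlt | hge
      · -- k = t + 1
        obtain rfl : t = m := by omega
        rw [hzero t (t + 1) (by omega), ih t (by omega)]
        simp only [Nat.sub_self, pow_zero, Nat.add_sub_cancel, mul_zero, zero_add,
          mul_one]
        rw [hT t, pow_add, Finset.prod_div_distrib, Finset.prod_div_distrib,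
          prodA t t, Finset.prod_range_succ (fun n => (1 - ςP ^ (n + 1))) t]
        have hB := hBne t
        have hM := hne (t + 1) (by omega)
        field_simp
        ring
      · -- k = m + 1 ≤ t
        rw [ih (m + 1) (by omega), ih m (by omega)]
        set u := t - (m + 1) with hu
        rw [show t + 1 - (m + 1) = u + 1 from by omega,
          show t - m = u + 1 from by omega,
          show m + 1 - 1 = m from rfl]
        rw [hT m, pow_add, Finset.prod_div_distrib, Finset.prod_div_distrib,
          Finset.prod_div_distrib, prodA t m,
          Finset.prod_range_succ (fun n => (1 - ςP ^ (t - n))) m,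
          Finset.prod_range_succ (fun n => (1 - ςP ^ (n + 1))) m,
          show t - m = u + 1 from by omega,
          show ςP ^ (t + 1) = ςP ^ (m + 1) * ςP ^ (u + 1) from by
            rw [← pow_add]; congr 1; omega]
        have hB := hBne m
        have hM := hne (m + 1) (by omega)
        field_simp
        ring
end

section
/- Define Ψ_{p,k}(t) = Σ_{r=0}^{p} [(-ς_P^{t-p+1})^r ς_P^{r(r-1)/2} qbinom(p, r, ς_P)] / ∏_{j=p}^{k} (ν_P ς_P^r − ν_D ς_D ς_DP^j). Then for all t, p ≤ k: ν_D ς_D ς_DP^k Ψ_{p,k}(t-1) + Ψ_{p,k-1}(t-1) = ν_P Ψ_{p,k}(t), provided all denominators ν_P ς_P^r − ν_D ς_D ς_DP^j are nonzero. -/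
/-- The Gaussian (q-)binomial coefficient. -/
noncomputable def qbinom (t k : ℕ) (q : ℝ) : ℝ :=
  ∏ n ∈ Finset.range k, (1 - q ^ (t - n)) / (1 - q ^ (n + 1))

/-- `Ψ_{p,k}(t) = Σ_{r=0}^{p} [(-ς_P^{t-p+1})^r ς_P^{r(r-1)/2} qbinom(p,r,ς_P)]
                    / ∏_{j=p}^{k} (ν_P ς_P^r - ν_D ς_D ς_DP^j)`. -/
noncomputable def Psi (νP νD ςP ςD ςDP : ℝ) (p : ℕ) (k t : ℤ) : ℝ :=
  ∑ r ∈ Finset.range (p + 1),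
    ((-(ςP ^ (t - p + 1))) ^ r * ςP ^ (r * (r - 1) / 2) * qbinom p r ςP) /
      ∏ j ∈ Finset.Icc (p : ℤ) k, (νP * ςP ^ r - νD * ςD * ςDP ^ j)

/-- `ν_D ς_D ς_DP^k Ψ_{p,k}(t-1) + Ψ_{p,k-1}(t-1) = ν_P Ψ_{p,k}(t)`
for all `t` and `p ≤ k`, provided all denominators are nonzero. -/
theorem psi_recursion (νP νD ςP ςD ςDP : ℝ)
    (hνP : 0 < νP) (hνD : 0 < νD) (hςP : 0 < ςP) (hςD : 0 < ςD) (hςDP : 0 < ςDP)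
    (hςP1 : ςP ≠ 1) (p : ℕ) (k t : ℤ) (hpk : (p : ℤ) ≤ k)
    (hden : ∀ r ≤ p, ∀ j ∈ Finset.Icc (p : ℤ) k, νP * ςP ^ r ≠ νD * ςD * ςDP ^ j) :
    νD * ςD * ςDP ^ k * Psi νP νD ςP ςD ςDP p k (t - 1)
      + Psi νP νD ςP ςD ςDP p (k - 1) (t - 1)
      = νP * Psi νP νD ςP ςD ςDP p k t := by
  have hxP : ςP ≠ 0 := ne_of_gt hςP
  unfold Psi
  rw [Finset.mul_sum, Finset.mul_sum, ← Finset.sum_add_distrib]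
  refine Finset.sum_congr rfl fun r hr => ?_
  have hr' : r ≤ p := Nat.lt_succ_iff.mp (Finset.mem_range.mp hr)
  have hIcc : Finset.Icc (p:ℤ) k = insert k (Finset.Icc (p:ℤ) (k-1)) := by
    ext j; simp only [Finset.mem_Icc, Finset.mem_insert]; omega
  have hknot : k ∉ Finset.Icc (p:ℤ) (k-1) := by
    simp only [Finset.mem_Icc]; omega
  rw [hIcc, Finset.prod_insert hknot]
  set c := νP * ςP ^ r - νD * ςD * ςDP ^ k with hc
  set D1 := ∏ j ∈ Finset.Icc (p:ℤ) (k-1), (νP * ςP ^ r - νD * ςD * ςDP ^ j) with hD1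
  have hcne : c ≠ 0 :=
    sub_ne_zero.mpr (hden r hr' k (by simp only [Finset.mem_Icc]; omega))
  have hD1ne : D1 ≠ 0 := by
    apply Finset.prod_ne_zero_iff.mpr
    intro j hj
    refine sub_ne_zero.mpr (hden r hr' j ?_)
    simp only [Finset.mem_Icc] at hj ⊢; omega
  have hA : (-(ςP ^ (t - p + 1))) ^ r = (-(ςP ^ (t - 1 - p + 1))) ^ r * ςP ^ r := by
    rw [← mul_pow, neg_mul]
    congr 2
    rw [← zpow_add_one₀ hxP]
    congr 1; ring
  rw [hA]
  have hkey : νD * ςD * ςDP ^ k = νP * ςP ^ r - c := by rw [hc]; ring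
  rw [hkey]
  field_simp
  ring
end
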